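/- Let P be an orthogonal projection and U a unitary on a finite-dimensional Hilbert space F, and let z₁, z₂ be in the open unit disc with z₂ ≠ 0. If there is a nonzero vector w with (P^⊥ + z₁z₂P)Uw = z₁w and U*(P + z₁z₂P^⊥)w = z₂w, then Pw ≠ 0 and Ψ(z₁)(Pw) = z₂(Pw), where Ψ(z) = P(I - zU*P^⊥)⁻¹U*P|_{Ran P}. -/

import Mathlib

open ContinuousLinearMap

set_option maxHeartbeats 1000000
set_option synthInstance.maxHeartbeats 200000

/-- Passage from the linear-pencil description to the inner-function description:
if `(z₁, z₂) ∈ 𝔻²`, `z₂ ≠ 0`, and `w ≠ 0` satisfies `(P^⊥ + z₁z₂P)Uw = z₁w` and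
`U*(P + z₁z₂P^⊥)w = z₂w`, then `Pw ≠ 0` and `Ψ(z₁)(Pw) = z₂(Pw)`, where
`Ψ(z) = P(I - zU*P^⊥)⁻¹U*P`. -/
theorem pencil_to_inner {n : ℕ}
    (P U : EuclideanSpace ℂ (Fin n) →L[ℂ] EuclideanSpace ℂ (Fin n))
    (hP : IsSelfAdjoint P) (hP2 : P ∘L P = P)
    (hU1 : adjoint U ∘L U = 1) (hU2 : U ∘L adjoint U = 1)
    (z₁ z₂ : ℂ) (hz₁ : ‖z₁‖ < 1) (hz₂ : ‖z₂‖ < 1) (hz₂0 : z₂ ≠ 0)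
    (w : EuclideanSpace ℂ (Fin n)) (hw : w ≠ 0)
    (h1 : (((1 - P) + (z₁ * z₂) • P) ∘L U) w = z₁ • w)
    (h2 : (adjoint U ∘L (P + (z₁ * z₂) • (1 - P))) w = z₂ • w) :
    P w ≠ 0 ∧
    (P ∘L Ring.inverse ((1 : EuclideanSpace ℂ (Fin n) →L[ℂ] EuclideanSpace ℂ (Fin n))
        - z₁ • (adjoint U ∘L (1 - P))) ∘L (adjoint U ∘L P)) (P w) = z₂ • (P w) := by
  set Q : EuclideanSpace ℂ (Fin n) →L[ℂ] EuclideanSpace ℂ (Fin n) := 1 - P with hQdef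
  -- U* is isometric
  have hUU : ∀ y : EuclideanSpace ℂ (Fin n), U (adjoint U y) = y := by
    intro y
    have := congrArg (fun f : EuclideanSpace ℂ (Fin n) →L[ℂ] EuclideanSpace ℂ (Fin n) => f y) hU2
    simpa using this
  have hUiso : ∀ y : EuclideanSpace ℂ (Fin n), ‖adjoint U y‖ = ‖y‖ := by
    intro y
    have h : (inner ℂ (adjoint U y) (adjoint U y) : ℂ) = inner ℂ y y := by
      rw [ContinuousLinearMap.adjoint_inner_left, hUU]
    rw [inner_self_eq_norm_sq_to_K, inner_self_eq_norm_sq_to_K] at h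
    have h' : ‖adjoint U y‖ ^ 2 = ‖y‖ ^ 2 := by exact_mod_cast h
    exact sq_eq_sq₀ (norm_nonneg _) (norm_nonneg _) |>.mp h'
  -- Q is a self-adjoint idempotent
  have hP2' : P * P = P := hP2
  have hQ2 : Q * Q = Q := by
    simp only [hQdef, sub_mul, mul_sub, one_mul, mul_one, hP2']
    abel
  have hQsa : IsSelfAdjoint Q := by
    rw [hQdef]
    show star ((1 : EuclideanSpace ℂ (Fin n) →L[ℂ] EuclideanSpace ℂ (Fin n)) - P) = _
    rw [ContinuousLinearMap.star_eq_adjoint, map_sub, ← ContinuousLinearMap.star_eq_adjoint,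
      ← ContinuousLinearMap.star_eq_adjoint, star_one, hP.star_eq]
  have hQQ : ∀ x, Q (Q x) = Q x := by
    intro x
    have := congrArg (fun f : EuclideanSpace ℂ (Fin n) →L[ℂ] EuclideanSpace ℂ (Fin n) => f x) hQ2
    simpa [ContinuousLinearMap.mul_apply] using this
  -- Q is contractive
  have hQnorm : ∀ x : EuclideanSpace ℂ (Fin n), ‖Q x‖ ≤ ‖x‖ := by
    intro x
    rcases eq_or_ne (Q x) 0 with h0 | h0
    · simp [h0]
    · have hQa : ContinuousLinearMap.adjoint Q = Q := hQsa.adjoint_eq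
      have hinner : (inner ℂ (Q x) (Q x) : ℂ) = inner ℂ x (Q x) := by
        calc (inner ℂ (Q x) (Q x) : ℂ)
            = inner ℂ (ContinuousLinearMap.adjoint Q x) (Q x) := by rw [hQa]
          _ = inner ℂ x (Q (Q x)) := ContinuousLinearMap.adjoint_inner_left Q (Q x) x
          _ = inner ℂ x (Q x) := by rw [hQQ]
      have h1' : ‖Q x‖ ^ 2 = Complex.re (inner ℂ x (Q x) : ℂ) := by
        rw [← hinner, inner_self_eq_norm_sq_to_K]
        norm_cast
      have h2' : Complex.re (inner ℂ x (Q x) : ℂ) ≤ ‖Q x‖ * ‖x‖ := by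
        calc Complex.re (inner ℂ x (Q x) : ℂ) ≤ ‖(inner ℂ x (Q x) : ℂ)‖ :=
              Complex.re_le_norm _
          _ ≤ ‖x‖ * ‖Q x‖ := norm_inner_le_norm _ _
          _ = ‖Q x‖ * ‖x‖ := mul_comm _ _
      have h3' : ‖Q x‖ ^ 2 ≤ ‖Q x‖ * ‖x‖ := h1'.le.trans h2'
      have hQxpos : 0 < ‖Q x‖ := norm_pos_iff.mpr h0
      nlinarith
  -- the pencil operator is invertible
  set A : EuclideanSpace ℂ (Fin n) →L[ℂ] EuclideanSpace ℂ (Fin n) :=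
    1 - z₁ • (adjoint U ∘L Q) with hAdef
  have hTnorm : ‖z₁ • (adjoint U ∘L Q)‖ < 1 := by
    have hT : ‖adjoint U ∘L Q‖ ≤ 1 := by
      refine opNorm_le_bound _ zero_le_one fun x => ?_
      calc ‖(adjoint U ∘L Q) x‖ = ‖Q x‖ := hUiso _
        _ ≤ ‖x‖ := hQnorm x
        _ = 1 * ‖x‖ := (one_mul _).symm
    calc ‖z₁ • (adjoint U ∘L Q)‖ ≤ ‖z₁‖ * ‖adjoint U ∘L Q‖ := ContinuousLinearMap.opNorm_smul_le _ _
      _ ≤ ‖z₁‖ * 1 := mul_le_mul_of_nonneg_left hT (norm_nonneg _)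
      _ = ‖z₁‖ := mul_one _
      _ < 1 := hz₁
  have hA : IsUnit A := by
    have := (Units.oneSub (z₁ • (adjoint U ∘L Q)) hTnorm).isUnit
    simpa [Units.val_oneSub, hAdef] using this
  -- expand h2
  have h2' : adjoint U (P w) + (z₁ * z₂) • adjoint U (Q w) = z₂ • w := by
    have := h2
    simp only [ContinuousLinearMap.comp_apply, ContinuousLinearMap.add_apply,
      ContinuousLinearMap.smul_apply, map_add, map_smul] at this
    simpa [hQdef] using this
  -- key identity: U* P w = z₂ • A w
  have hkey : adjoint U (P w) = z₂ • (A w) := by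
    have hAw : A w = w - z₁ • adjoint U (Q w) := by
      simp [hAdef, ContinuousLinearMap.sub_apply, ContinuousLinearMap.smul_apply,
        ContinuousLinearMap.comp_apply]
    rw [hAw, smul_sub, smul_smul]
    rw [show z₂ * z₁ = z₁ * z₂ by ring, ← h2']
    abel
  -- P w ≠ 0
  have hPw : P w ≠ 0 := by
    intro hPw0
    have hQw : Q w = w := by
      simp [hQdef, ContinuousLinearMap.sub_apply, hPw0]
    have hc : (z₁ * z₂) • adjoint U w = z₂ • w := by
      have := h2'
      rw [hQw, hPw0] at this
      simpa using this
    have h3 : z₁ • adjoint U w = w := by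
      have := congrArg (fun v : EuclideanSpace ℂ (Fin n) => z₂⁻¹ • v) hc
      simp only [smul_smul] at this
      rw [show z₂⁻¹ * (z₁ * z₂) = z₁ by rw [mul_comm z₁ z₂, ← mul_assoc, inv_mul_cancel₀ hz₂0, one_mul], inv_mul_cancel₀ hz₂0,
        one_smul] at this
      exact this
    have hnorm : ‖w‖ = ‖z₁‖ * ‖w‖ := by
      conv_lhs => rw [← h3]
      rw [norm_smul, hUiso]
    have hwpos : 0 < ‖w‖ := norm_pos_iff.mpr hw
    nlinarith
  refine ⟨hPw, ?_⟩
  -- the main computation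
  have hPPw : P (P w) = P w := by
    have := congrArg (fun f : EuclideanSpace ℂ (Fin n) →L[ℂ] EuclideanSpace ℂ (Fin n) => f w) hP2
    simpa using this
  have hinv : Ring.inverse A * A = 1 := Ring.inverse_mul_cancel A hA
  calc (P ∘L Ring.inverse A ∘L (adjoint U ∘L P)) (P w)
      = P (Ring.inverse A (adjoint U (P (P w)))) := rfl
    _ = P (Ring.inverse A (z₂ • A w)) := by rw [hPPw, hkey]
    _ = z₂ • P (Ring.inverse A (A w)) := by rw [map_smul, map_smul]
    _ = z₂ • P ((Ring.inverse A * A) w) := rfl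
    _ = z₂ • P w := by rw [hinv]; simp
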